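/- For any probability distributions μ and ν on ℝ^d with finite second moments and any z ∈ ℝ^d, the covariance matrices satisfy ‖Cov(μ) − Cov(ν)‖ ≤ 2(sqrt(∫|x−z|² dμ) + sqrt(∫|y−z|² dν)) · W₂(μ, ν). -/

import Mathlib

open MeasureTheory Real Filter

/-- The operator (spectral) norm of a square matrix. -/
noncomputable def opNorm {k : ℕ} (A : Matrix (Fin k) (Fin k) ℝ) : ℝ :=
  ‖LinearMap.toContinuousLinearMap (Matrix.toEuclideanLin A)‖

/-- The 2-Wasserstein distance between two probability measures on `ℝ^d`,
defined as the infimum of quadratic transport costs over couplings. -/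
noncomputable def W2 {d : ℕ} (μ ν : Measure (EuclideanSpace ℝ (Fin d))) : ℝ :=
  sInf {r : ℝ | ∃ γ : Measure (EuclideanSpace ℝ (Fin d) × EuclideanSpace ℝ (Fin d)),
    IsProbabilityMeasure γ ∧ γ.map Prod.fst = μ ∧ γ.map Prod.snd = ν ∧
    r = Real.sqrt (∫ p, ‖p.1 - p.2‖ ^ 2 ∂γ)}

/-- The covariance matrix of a probability distribution on `ℝ^d`. -/
noncomputable def covMatrix {d : ℕ} (μ : Measure (EuclideanSpace ℝ (Fin d))) :
    Matrix (Fin d) (Fin d) ℝ :=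
  fun i j => (∫ x, x i * x j ∂μ) - (∫ x, x i ∂μ) * (∫ x, x j ∂μ)

/-! ### Auxiliary lemmas -/

theorem my_mul_int {α : Type*} [MeasurableSpace α] {μ : Measure α} {f g : α → ℝ}
    (hf : MemLp f 2 μ) (hg : MemLp g 2 μ) : Integrable (fun x => f x * g x) μ := by
  rw [← memLp_one_iff_integrable]
  have := hg.smul (φ := f) hf (r := 1)
  exact this

theorem my_cs {α : Type*} [MeasurableSpace α] {μ : Measure α} {f g : α → ℝ}
    (hf : MemLp f 2 μ) (hg : MemLp g 2 μ) :
    |∫ x, f x * g x ∂μ| ≤ Real.sqrt (∫ x, f x ^ 2 ∂μ) * Real.sqrt (∫ x, g x ^ 2 ∂μ) := by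
  have habs : ∀ y : ℝ, |y| ^ (2:ℝ) = y ^ 2 := fun y => by
    rw [show ((2:ℝ)) = ((2:ℕ):ℝ) from by norm_num, Real.rpow_natCast, sq_abs]
  have h1 : |∫ x, f x * g x ∂μ| ≤ ∫ x, |f x| * |g x| ∂μ := by
    rw [← Real.norm_eq_abs]
    calc ‖∫ x, f x * g x ∂μ‖ ≤ ∫ x, ‖f x * g x‖ ∂μ := norm_integral_le_integral_norm _
    _ = ∫ x, |f x| * |g x| ∂μ := by simp [abs_mul, Real.norm_eq_abs]
  have hconj : Real.HolderConjugate 2 2 := Real.HolderConjugate.two_two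
  have h2 := integral_mul_le_Lp_mul_Lq_of_nonneg (μ := μ) hconj
    (f := fun x => |f x|) (g := fun x => |g x|)
    (Eventually.of_forall fun x => abs_nonneg _) (Eventually.of_forall fun x => abs_nonneg _)
    (by rw [ENNReal.ofReal_ofNat]; exact hf.abs) (by rw [ENNReal.ofReal_ofNat]; exact hg.abs)
  refine h1.trans (h2.trans_eq ?_)
  rw [Real.sqrt_eq_rpow, Real.sqrt_eq_rpow]
  congr 2 <;> · refine integral_congr_ae (Eventually.of_forall fun x => ?_)
                simp only
                exact habs _

theorem my_jensen {α : Type*} [MeasurableSpace α] {μ : Measure α} [IsProbabilityMeasure μ]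
    {f : α → ℝ} (hf : MemLp f 2 μ) : |∫ x, f x ∂μ| ≤ Real.sqrt (∫ x, f x ^ 2 ∂μ) := by
  have := my_cs hf (memLp_const (1:ℝ) (p := 2) (μ := μ))
  simpa using this

theorem coord_le_norm {d : ℕ} (x : EuclideanSpace ℝ (Fin d)) (i : Fin d) : |x i| ≤ ‖x‖ := by
  rw [EuclideanSpace.norm_eq, show |x i| = Real.sqrt (x i ^ 2) from (Real.sqrt_sq_eq_abs _).symm]
  apply Real.sqrt_le_sqrt
  simp only [Real.norm_eq_abs, sq_abs]
  exact Finset.single_le_sum (f := fun j => x j ^ 2) (fun j _ => sq_nonneg _) (Finset.mem_univ i)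

theorem bilin_eq {d : ℕ} (A : Matrix (Fin d) (Fin d) ℝ) (u v : EuclideanSpace ℝ (Fin d)) :
    (inner ℝ v (Matrix.toEuclideanLin A u) : ℝ) = ∑ i, ∑ j, v i * (A i j * u j) := by
  rw [PiLp.inner_apply]
  simp only [Matrix.toEuclideanLin_apply, RCLike.inner_apply, conj_trivial]
  congr 1
  ext i
  simp [Matrix.mulVec, dotProduct, Finset.mul_sum]
  rw [Finset.sum_mul]; exact Finset.sum_congr rfl fun j _ => by ring

theorem transfer_int {α β : Type*} [MeasurableSpace α] [MeasurableSpace β] {γ : Measure β}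
    {μ : Measure α} {g : β → α} (hg : Measurable g) (h1 : γ.map g = μ) {h : α → ℝ}
    (hm : AEStronglyMeasurable h μ) : ∫ x, h x ∂μ = ∫ p, h (g p) ∂γ := by
  rw [← h1] at hm ⊢
  exact integral_map hg.aemeasurable hm

theorem transfer_integrable {α β : Type*} [MeasurableSpace α] [MeasurableSpace β] {γ : Measure β}
    {μ : Measure α} {g : β → α} (hg : Measurable g) (h1 : γ.map g = μ) {h : α → ℝ}
    (hi : Integrable h μ) : Integrable (fun p => h (g p)) γ := by
  rw [← h1] at hi
  exact (integrable_map_measure hi.aestronglyMeasurable hg.aemeasurable).mp hi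

theorem shift_cov {α : Type*} [MeasurableSpace α] {μ : Measure α} [IsProbabilityMeasure μ]
    {F G : α → ℝ} (c₁ c₂ : ℝ) (hF : Integrable F μ) (hG : Integrable G μ)
    (hFG : Integrable (fun x => F x * G x) μ) :
    (∫ x, (F x - c₁) * (G x - c₂) ∂μ) - (∫ x, F x - c₁ ∂μ) * (∫ x, G x - c₂ ∂μ)
      = (∫ x, F x * G x ∂μ) - (∫ x, F x ∂μ) * (∫ x, G x ∂μ) := by
  have iA : Integrable (fun x => F x * G x - c₂ * F x) μ := hFG.sub (hF.const_mul c₂)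
  have iB : Integrable (fun x => c₁ * G x - c₁ * c₂) μ :=
    (hG.const_mul c₁).sub (integrable_const _)
  have e0 : ∀ x, (F x - c₁) * (G x - c₂)
      = (F x * G x - c₂ * F x) - (c₁ * G x - c₁ * c₂) := fun x => by ring
  simp_rw [e0]
  rw [integral_sub iA iB, integral_sub hFG (hF.const_mul c₂),
    integral_sub (hG.const_mul c₁) (integrable_const _), integral_const_mul, integral_const_mul,
    integral_sub hF (integrable_const _), integral_sub hG (integrable_const _)]
  simp only [integral_const, measure_univ, ENNReal.toReal_one, smul_eq_mul, one_mul, probReal_univ]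
  ring

theorem cov_bilin {d : ℕ} (μ : Measure (EuclideanSpace ℝ (Fin d))) [IsProbabilityMeasure μ]
    (hμ2 : Integrable (fun x => ‖x‖ ^ 2) μ) (z u v : EuclideanSpace ℝ (Fin d)) :
    ∑ i, ∑ j, v i * (covMatrix μ i j * u j)
      = (∫ x, (inner ℝ v (x - z) : ℝ) * (inner ℝ u (x - z) : ℝ) ∂μ)
        - (∫ x, (inner ℝ v (x - z) : ℝ) ∂μ) * (∫ x, (inner ℝ u (x - z) : ℝ) ∂μ) := by
  have hid : MemLp (fun x : EuclideanSpace ℝ (Fin d) => x) 2 μ :=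
    (memLp_two_iff_integrable_sq_norm aestronglyMeasurable_id).mpr hμ2
  have hcoord : ∀ i, MemLp (fun x : EuclideanSpace ℝ (Fin d) => x i) 2 μ := by
    intro i
    have := hid.const_inner (𝕜 := ℝ) (EuclideanSpace.single i (1:ℝ))
    simpa [EuclideanSpace.inner_single_left] using this
  have hxi : ∀ i, Integrable (fun x : EuclideanSpace ℝ (Fin d) => x i) μ :=
    fun i => (hcoord i).integrable one_le_two
  have hxij : ∀ i j, Integrable (fun x : EuclideanSpace ℝ (Fin d) => x i * x j) μ :=
    fun i j => my_mul_int (hcoord i) (hcoord j)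
  have hterm : ∀ i j, Integrable (fun x : EuclideanSpace ℝ (Fin d) => v i * x i * (u j * x j)) μ := by
    intro i j
    have e : (fun x : EuclideanSpace ℝ (Fin d) => v i * x i * (u j * x j))
        = fun x => (v i * u j) * (x i * x j) := by funext x; ring
    rw [e]; exact (hxij i j).const_mul _
  have step1 : ∑ i, ∑ j, v i * (covMatrix μ i j * u j)
      = (∫ x, (inner ℝ v x : ℝ) * (inner ℝ u x : ℝ) ∂μ)
        - (∫ x, (inner ℝ v x : ℝ) ∂μ) * (∫ x, (inner ℝ u x : ℝ) ∂μ) := by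
    have e1 : ∫ x, (inner ℝ v x : ℝ) * (inner ℝ u x : ℝ) ∂μ
        = ∑ i, ∑ j, v i * (∫ x, x i * x j ∂μ) * u j := by
      have pt : ∀ x : EuclideanSpace ℝ (Fin d), (inner ℝ v x : ℝ) * (inner ℝ u x : ℝ)
          = ∑ i, ∑ j, v i * x i * (u j * x j) := by
        intro x
        simp only [PiLp.inner_apply, RCLike.inner_apply, conj_trivial]
        rw [Finset.sum_mul_sum]
        exact Finset.sum_congr rfl fun i _ => Finset.sum_congr rfl fun j _ => by ring
      rw [integral_congr_ae (Eventually.of_forall pt),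
        integral_finset_sum _ (fun i _ => integrable_finset_sum _ (fun j _ => hterm i j))]
      refine Finset.sum_congr rfl fun i _ => ?_
      rw [integral_finset_sum _ (fun j _ => hterm i j)]
      refine Finset.sum_congr rfl fun j _ => ?_
      have e : (fun x : EuclideanSpace ℝ (Fin d) => v i * x i * (u j * x j))
          = fun x => (v i * u j) * (x i * x j) := by funext x; ring
      rw [e, integral_const_mul]; ring
    have e2 : ∀ w : EuclideanSpace ℝ (Fin d), ∫ x, (inner ℝ w x : ℝ) ∂μ
        = ∑ i, w i * ∫ x, x i ∂μ := by
      intro w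
      have pt : ∀ x : EuclideanSpace ℝ (Fin d), (inner ℝ w x : ℝ) = ∑ i, w i * x i := by
        intro x; simp [PiLp.inner_apply, mul_comm]
      rw [integral_congr_ae (Eventually.of_forall pt),
        integral_finset_sum _ (fun i _ => (hxi i).const_mul _)]
      exact Finset.sum_congr rfl fun i _ => integral_const_mul _ _
    rw [e1, e2, e2, Finset.sum_mul_sum]
    simp only [covMatrix]
    rw [← Finset.sum_sub_distrib]
    refine Finset.sum_congr rfl fun i _ => ?_
    rw [← Finset.sum_sub_distrib]
    exact Finset.sum_congr rfl fun j _ => by ring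
  rw [step1]
  have e2 : ∀ (w x : EuclideanSpace ℝ (Fin d)), (inner ℝ w (x - z) : ℝ) = inner ℝ w x - inner ℝ w z :=
    fun w x => inner_sub_right w x z
  simp_rw [e2]
  exact (shift_cov (inner ℝ v z : ℝ) (inner ℝ u z : ℝ)
    ((hid.const_inner (𝕜 := ℝ) v).integrable one_le_two)
    ((hid.const_inner (𝕜 := ℝ) u).integrable one_le_two)
    (my_mul_int (hid.const_inner (𝕜 := ℝ) v) (hid.const_inner (𝕜 := ℝ) u))).symm

theorem opNorm_le_of_bilin {d : ℕ} (M : Matrix (Fin d) (Fin d) ℝ) (K : ℝ) (hK0 : 0 ≤ K)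
    (core : ∀ u v : EuclideanSpace ℝ (Fin d),
      |(inner ℝ v (Matrix.toEuclideanLin M u) : ℝ)| ≤ K * (‖u‖ * ‖v‖)) :
    opNorm M ≤ K := by
  unfold opNorm
  refine ContinuousLinearMap.opNorm_le_bound _ hK0 fun u => ?_
  rw [show (LinearMap.toContinuousLinearMap (Matrix.toEuclideanLin M)) u
      = Matrix.toEuclideanLin M u
    from congrFun (LinearMap.coe_toContinuousLinearMap' _) u]
  set w := Matrix.toEuclideanLin M u with hw
  rcases eq_or_lt_of_le (norm_nonneg w) with h0 | h0
  · rw [← h0]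
    positivity
  · have := core u w
    rw [real_inner_self_eq_norm_sq, abs_of_nonneg (sq_nonneg _)] at this
    have h2' : ‖w‖ * ‖w‖ ≤ (K * ‖u‖) * ‖w‖ := by nlinarith [this]
    exact le_of_mul_le_mul_right (by linarith [h2']) h0

set_option maxHeartbeats 2000000 in
theorem key_coupling {d : ℕ} (μ ν : Measure (EuclideanSpace ℝ (Fin d)))
    [IsProbabilityMeasure μ] [IsProbabilityMeasure ν]
    (hμ2 : Integrable (fun x => ‖x‖ ^ 2) μ) (hν2 : Integrable (fun y => ‖y‖ ^ 2) ν)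
    (z : EuclideanSpace ℝ (Fin d))
    (γ : Measure (EuclideanSpace ℝ (Fin d) × EuclideanSpace ℝ (Fin d)))
    [IsProbabilityMeasure γ] (h1 : γ.map Prod.fst = μ) (h2 : γ.map Prod.snd = ν) :
    opNorm (covMatrix μ - covMatrix ν)
      ≤ 2 * (Real.sqrt (∫ x, ‖x - z‖ ^ 2 ∂μ) + Real.sqrt (∫ y, ‖y - z‖ ^ 2 ∂ν))
          * Real.sqrt (∫ p, ‖p.1 - p.2‖ ^ 2 ∂γ) := by
  classical
  have hz : True := trivial
  set Mμ : ℝ := ∫ x, ‖x - z‖ ^ 2 ∂μ with hMμdef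
  set Mν : ℝ := ∫ y, ‖y - z‖ ^ 2 ∂ν with hMνdef
  set C : ℝ := ∫ p : (EuclideanSpace ℝ (Fin d)) × (EuclideanSpace ℝ (Fin d)), ‖p.1 - p.2‖ ^ 2 ∂γ with hCdef
  -- MemLp facts over γ
  have hfst : MemLp (fun p : (EuclideanSpace ℝ (Fin d)) × (EuclideanSpace ℝ (Fin d)) => p.1) 2 γ :=
    (memLp_two_iff_integrable_sq_norm continuous_fst.aestronglyMeasurable).mpr
      (transfer_integrable measurable_fst h1 hμ2)
  have hsnd : MemLp (fun p : (EuclideanSpace ℝ (Fin d)) × (EuclideanSpace ℝ (Fin d)) => p.2) 2 γ :=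
    (memLp_two_iff_integrable_sq_norm continuous_snd.aestronglyMeasurable).mpr
      (transfer_integrable measurable_snd h2 hν2)
  have hfz : MemLp (fun p : (EuclideanSpace ℝ (Fin d)) × (EuclideanSpace ℝ (Fin d)) => p.1 - z) 2 γ := hfst.sub (memLp_const z)
  have hsz : MemLp (fun p : (EuclideanSpace ℝ (Fin d)) × (EuclideanSpace ℝ (Fin d)) => p.2 - z) 2 γ := hsnd.sub (memLp_const z)
  have hfs : MemLp (fun p : (EuclideanSpace ℝ (Fin d)) × (EuclideanSpace ℝ (Fin d)) => p.1 - p.2) 2 γ := hfst.sub hsnd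
  -- transfers of the norm integrals
  have hMμγ : Mμ = ∫ p : (EuclideanSpace ℝ (Fin d)) × (EuclideanSpace ℝ (Fin d)), ‖p.1 - z‖ ^ 2 ∂γ :=
    transfer_int measurable_fst h1
      (((continuous_id.sub continuous_const).norm.pow 2).aestronglyMeasurable)
  have hMνγ : Mν = ∫ p : (EuclideanSpace ℝ (Fin d)) × (EuclideanSpace ℝ (Fin d)), ‖p.2 - z‖ ^ 2 ∂γ :=
    transfer_int measurable_snd h2
      (((continuous_id.sub continuous_const).norm.pow 2).aestronglyMeasurable)
  have hMμ0 : 0 ≤ Mμ := integral_nonneg fun x => by positivity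
  have hMν0 : 0 ≤ Mν := integral_nonneg fun x => by positivity
  have hC0 : 0 ≤ C := integral_nonneg fun p => by positivity
  -- generic L² bound for inner products
  have L2b : ∀ (w : EuclideanSpace ℝ (Fin d)) (f : (EuclideanSpace ℝ (Fin d)) × (EuclideanSpace ℝ (Fin d)) → EuclideanSpace ℝ (Fin d)), MemLp f 2 γ →
      Real.sqrt (∫ p, (inner ℝ w (f p) : ℝ) ^ 2 ∂γ)
        ≤ ‖w‖ * Real.sqrt (∫ p, ‖f p‖ ^ 2 ∂γ) := by
    intro w f hf
    have hint : Integrable (fun p => ‖f p‖ ^ 2) γ :=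
      (memLp_two_iff_integrable_sq_norm hf.1).mp hf
    have hmono : ∫ p, (inner ℝ w (f p) : ℝ) ^ 2 ∂γ ≤ ∫ p, ‖w‖ ^ 2 * ‖f p‖ ^ 2 ∂γ := by
      refine integral_mono (hf.const_inner w).integrable_sq (hint.const_mul _) fun p => ?_
      have := real_inner_mul_inner_self_le w (f p)
      rw [real_inner_self_eq_norm_sq, real_inner_self_eq_norm_sq] at this
      calc (inner ℝ w (f p) : ℝ) ^ 2 = (inner ℝ w (f p) : ℝ) * (inner ℝ w (f p) : ℝ) := by ring
        _ ≤ ‖w‖ ^ 2 * ‖f p‖ ^ 2 := this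
    calc Real.sqrt (∫ p, (inner ℝ w (f p) : ℝ) ^ 2 ∂γ)
        ≤ Real.sqrt (∫ p, ‖w‖ ^ 2 * ‖f p‖ ^ 2 ∂γ) := Real.sqrt_le_sqrt hmono
      _ = ‖w‖ * Real.sqrt (∫ p, ‖f p‖ ^ 2 ∂γ) := by
          rw [integral_const_mul, Real.sqrt_mul (sq_nonneg _), Real.sqrt_sq (norm_nonneg _)]
  -- the core bilinear estimate
  have core : ∀ u v : EuclideanSpace ℝ (Fin d),
      |(inner ℝ v (Matrix.toEuclideanLin (covMatrix μ - covMatrix ν) u) : ℝ)|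
        ≤ 2 * (Real.sqrt Mμ + Real.sqrt Mν) * Real.sqrt C * (‖u‖ * ‖v‖) := by
    intro u v
    have hA : MemLp (fun p : (EuclideanSpace ℝ (Fin d)) × (EuclideanSpace ℝ (Fin d)) => (inner ℝ v (p.1 - z) : ℝ)) 2 γ := hfz.const_inner v
    have hB : MemLp (fun p : (EuclideanSpace ℝ (Fin d)) × (EuclideanSpace ℝ (Fin d)) => (inner ℝ u (p.1 - z) : ℝ)) 2 γ := hfz.const_inner u
    have hA' : MemLp (fun p : (EuclideanSpace ℝ (Fin d)) × (EuclideanSpace ℝ (Fin d)) => (inner ℝ v (p.2 - z) : ℝ)) 2 γ := hsz.const_inner v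
    have hB' : MemLp (fun p : (EuclideanSpace ℝ (Fin d)) × (EuclideanSpace ℝ (Fin d)) => (inner ℝ u (p.2 - z) : ℝ)) 2 γ := hsz.const_inner u
    have hD : MemLp (fun p : (EuclideanSpace ℝ (Fin d)) × (EuclideanSpace ℝ (Fin d)) => (inner ℝ v (p.1 - p.2) : ℝ)) 2 γ := hfs.const_inner v
    have hE : MemLp (fun p : (EuclideanSpace ℝ (Fin d)) × (EuclideanSpace ℝ (Fin d)) => (inner ℝ u (p.1 - p.2) : ℝ)) 2 γ := hfs.const_inner u
    have hDpt : ∀ (w : EuclideanSpace ℝ (Fin d)) (p : (EuclideanSpace ℝ (Fin d)) × (EuclideanSpace ℝ (Fin d))),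
        (inner ℝ w (p.1 - p.2) : ℝ) = (inner ℝ w (p.1 - z) : ℝ) - (inner ℝ w (p.2 - z) : ℝ) := by
      intro w p
      rw [← inner_sub_right]
      congr 1
      abel
    rw [bilin_eq]
    have esub : ∑ i, ∑ j, v i * ((covMatrix μ - covMatrix ν) i j * u j)
        = (∑ i, ∑ j, v i * (covMatrix μ i j * u j))
          - ∑ i, ∑ j, v i * (covMatrix ν i j * u j) := by
      rw [← Finset.sum_sub_distrib]
      refine Finset.sum_congr rfl fun i _ => ?_
      rw [← Finset.sum_sub_distrib]
      refine Finset.sum_congr rfl fun j _ => ?_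
      rw [Matrix.sub_apply]
      ring
    rw [esub, cov_bilin μ hμ2 z u v, cov_bilin ν hν2 z u v]
    -- transfer the six integrals to γ
    have contv : Continuous fun x : EuclideanSpace ℝ (Fin d) => (inner ℝ v (x - z) : ℝ) :=
      continuous_const.inner (continuous_id.sub continuous_const)
    have contu : Continuous fun x : EuclideanSpace ℝ (Fin d) => (inner ℝ u (x - z) : ℝ) :=
      continuous_const.inner (continuous_id.sub continuous_const)
    have t1 : ∫ x, (inner ℝ v (x - z) : ℝ) * (inner ℝ u (x - z) : ℝ) ∂μ
        = ∫ p : (EuclideanSpace ℝ (Fin d)) × (EuclideanSpace ℝ (Fin d)), (inner ℝ v (p.1 - z) : ℝ) * (inner ℝ u (p.1 - z) : ℝ) ∂γ :=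
      transfer_int measurable_fst h1 (contv.mul contu).aestronglyMeasurable
    have t2 : ∫ x, (inner ℝ v (x - z) : ℝ) ∂μ = ∫ p : (EuclideanSpace ℝ (Fin d)) × (EuclideanSpace ℝ (Fin d)), (inner ℝ v (p.1 - z) : ℝ) ∂γ :=
      transfer_int measurable_fst h1 contv.aestronglyMeasurable
    have t3 : ∫ x, (inner ℝ u (x - z) : ℝ) ∂μ = ∫ p : (EuclideanSpace ℝ (Fin d)) × (EuclideanSpace ℝ (Fin d)), (inner ℝ u (p.1 - z) : ℝ) ∂γ :=
      transfer_int measurable_fst h1 contu.aestronglyMeasurable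
    have t4 : ∫ y, (inner ℝ v (y - z) : ℝ) * (inner ℝ u (y - z) : ℝ) ∂ν
        = ∫ p : (EuclideanSpace ℝ (Fin d)) × (EuclideanSpace ℝ (Fin d)), (inner ℝ v (p.2 - z) : ℝ) * (inner ℝ u (p.2 - z) : ℝ) ∂γ :=
      transfer_int measurable_snd h2 (contv.mul contu).aestronglyMeasurable
    have t5 : ∫ y, (inner ℝ v (y - z) : ℝ) ∂ν = ∫ p : (EuclideanSpace ℝ (Fin d)) × (EuclideanSpace ℝ (Fin d)), (inner ℝ v (p.2 - z) : ℝ) ∂γ :=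
      transfer_int measurable_snd h2 contv.aestronglyMeasurable
    have t6 : ∫ y, (inner ℝ u (y - z) : ℝ) ∂ν = ∫ p : (EuclideanSpace ℝ (Fin d)) × (EuclideanSpace ℝ (Fin d)), (inner ℝ u (p.2 - z) : ℝ) ∂γ :=
      transfer_int measurable_snd h2 contu.aestronglyMeasurable
    rw [t1, t2, t3, t4, t5, t6]
    -- decompositions
    have d1 : (∫ p : (EuclideanSpace ℝ (Fin d)) × (EuclideanSpace ℝ (Fin d)), (inner ℝ v (p.1 - z) : ℝ) * (inner ℝ u (p.1 - z) : ℝ) ∂γ)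
        - ∫ p : (EuclideanSpace ℝ (Fin d)) × (EuclideanSpace ℝ (Fin d)), (inner ℝ v (p.2 - z) : ℝ) * (inner ℝ u (p.2 - z) : ℝ) ∂γ
        = (∫ p : (EuclideanSpace ℝ (Fin d)) × (EuclideanSpace ℝ (Fin d)), (inner ℝ v (p.1 - p.2) : ℝ) * (inner ℝ u (p.1 - z) : ℝ) ∂γ)
          + ∫ p : (EuclideanSpace ℝ (Fin d)) × (EuclideanSpace ℝ (Fin d)), (inner ℝ v (p.2 - z) : ℝ) * (inner ℝ u (p.1 - p.2) : ℝ) ∂γ := by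
      rw [← integral_sub (my_mul_int hA hB) (my_mul_int hA' hB'),
        ← integral_add (my_mul_int hD hB) (my_mul_int hA' hE)]
      refine integral_congr_ae (Eventually.of_forall fun p => ?_)
      simp only
      rw [hDpt v p, hDpt u p]
      ring
    have d2 : (∫ p : (EuclideanSpace ℝ (Fin d)) × (EuclideanSpace ℝ (Fin d)), (inner ℝ v (p.1 - z) : ℝ) ∂γ)
        - ∫ p : (EuclideanSpace ℝ (Fin d)) × (EuclideanSpace ℝ (Fin d)), (inner ℝ v (p.2 - z) : ℝ) ∂γ
        = ∫ p : (EuclideanSpace ℝ (Fin d)) × (EuclideanSpace ℝ (Fin d)), (inner ℝ v (p.1 - p.2) : ℝ) ∂γ := by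
      rw [← integral_sub (hA.integrable one_le_two) (hA'.integrable one_le_two)]
      refine integral_congr_ae (Eventually.of_forall fun p => ?_)
      simp only
      rw [hDpt v p]
    have d3 : (∫ p : (EuclideanSpace ℝ (Fin d)) × (EuclideanSpace ℝ (Fin d)), (inner ℝ u (p.1 - z) : ℝ) ∂γ)
        - ∫ p : (EuclideanSpace ℝ (Fin d)) × (EuclideanSpace ℝ (Fin d)), (inner ℝ u (p.2 - z) : ℝ) ∂γ
        = ∫ p : (EuclideanSpace ℝ (Fin d)) × (EuclideanSpace ℝ (Fin d)), (inner ℝ u (p.1 - p.2) : ℝ) ∂γ := by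
      rw [← integral_sub (hB.integrable one_le_two) (hB'.integrable one_le_two)]
      refine integral_congr_ae (Eventually.of_forall fun p => ?_)
      simp only
      rw [hDpt u p]
    -- L² bounds
    have sB : Real.sqrt (∫ p : (EuclideanSpace ℝ (Fin d)) × (EuclideanSpace ℝ (Fin d)), (inner ℝ u (p.1 - z) : ℝ) ^ 2 ∂γ) ≤ ‖u‖ * Real.sqrt Mμ := by
      rw [hMμγ]; exact L2b u _ hfz
    have sA' : Real.sqrt (∫ p : (EuclideanSpace ℝ (Fin d)) × (EuclideanSpace ℝ (Fin d)), (inner ℝ v (p.2 - z) : ℝ) ^ 2 ∂γ) ≤ ‖v‖ * Real.sqrt Mν := by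
      rw [hMνγ]; exact L2b v _ hsz
    have sD : Real.sqrt (∫ p : (EuclideanSpace ℝ (Fin d)) × (EuclideanSpace ℝ (Fin d)), (inner ℝ v (p.1 - p.2) : ℝ) ^ 2 ∂γ) ≤ ‖v‖ * Real.sqrt C :=
      L2b v _ hfs
    have sE : Real.sqrt (∫ p : (EuclideanSpace ℝ (Fin d)) × (EuclideanSpace ℝ (Fin d)), (inner ℝ u (p.1 - p.2) : ℝ) ^ 2 ∂γ) ≤ ‖u‖ * Real.sqrt C :=
      L2b u _ hfs
    -- scalar bounds
    have bDB : |∫ p : (EuclideanSpace ℝ (Fin d)) × (EuclideanSpace ℝ (Fin d)), (inner ℝ v (p.1 - p.2) : ℝ) * (inner ℝ u (p.1 - z) : ℝ) ∂γ|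
        ≤ (‖v‖ * Real.sqrt C) * (‖u‖ * Real.sqrt Mμ) :=
      (my_cs hD hB).trans (mul_le_mul sD sB (Real.sqrt_nonneg _) (by positivity))
    have bA'E : |∫ p : (EuclideanSpace ℝ (Fin d)) × (EuclideanSpace ℝ (Fin d)), (inner ℝ v (p.2 - z) : ℝ) * (inner ℝ u (p.1 - p.2) : ℝ) ∂γ|
        ≤ (‖v‖ * Real.sqrt Mν) * (‖u‖ * Real.sqrt C) :=
      (my_cs hA' hE).trans (mul_le_mul sA' sE (Real.sqrt_nonneg _) (by positivity))
    have bD : |∫ p : (EuclideanSpace ℝ (Fin d)) × (EuclideanSpace ℝ (Fin d)), (inner ℝ v (p.1 - p.2) : ℝ) ∂γ| ≤ ‖v‖ * Real.sqrt C :=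
      (my_jensen hD).trans sD
    have bE : |∫ p : (EuclideanSpace ℝ (Fin d)) × (EuclideanSpace ℝ (Fin d)), (inner ℝ u (p.1 - p.2) : ℝ) ∂γ| ≤ ‖u‖ * Real.sqrt C :=
      (my_jensen hE).trans sE
    have bB : |∫ p : (EuclideanSpace ℝ (Fin d)) × (EuclideanSpace ℝ (Fin d)), (inner ℝ u (p.1 - z) : ℝ) ∂γ| ≤ ‖u‖ * Real.sqrt Mμ :=
      (my_jensen hB).trans sB
    have bA' : |∫ p : (EuclideanSpace ℝ (Fin d)) × (EuclideanSpace ℝ (Fin d)), (inner ℝ v (p.2 - z) : ℝ) ∂γ| ≤ ‖v‖ * Real.sqrt Mν :=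
      (my_jensen hA').trans sA'
    have m1 : |∫ p : (EuclideanSpace ℝ (Fin d)) × (EuclideanSpace ℝ (Fin d)), (inner ℝ v (p.1 - p.2) : ℝ) ∂γ|
          * |∫ p : (EuclideanSpace ℝ (Fin d)) × (EuclideanSpace ℝ (Fin d)), (inner ℝ u (p.1 - z) : ℝ) ∂γ|
        ≤ (‖v‖ * Real.sqrt C) * (‖u‖ * Real.sqrt Mμ) :=
      mul_le_mul bD bB (abs_nonneg _) (by positivity)
    have m2 : |∫ p : (EuclideanSpace ℝ (Fin d)) × (EuclideanSpace ℝ (Fin d)), (inner ℝ v (p.2 - z) : ℝ) ∂γ|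
          * |∫ p : (EuclideanSpace ℝ (Fin d)) × (EuclideanSpace ℝ (Fin d)), (inner ℝ u (p.1 - p.2) : ℝ) ∂γ|
        ≤ (‖v‖ * Real.sqrt Mν) * (‖u‖ * Real.sqrt C) :=
      mul_le_mul bA' bE (abs_nonneg _) (by positivity)
    -- assemble
    calc |((∫ p : (EuclideanSpace ℝ (Fin d)) × (EuclideanSpace ℝ (Fin d)), (inner ℝ v (p.1 - z) : ℝ) * (inner ℝ u (p.1 - z) : ℝ) ∂γ)
            - (∫ p : (EuclideanSpace ℝ (Fin d)) × (EuclideanSpace ℝ (Fin d)), (inner ℝ v (p.1 - z) : ℝ) ∂γ)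
              * ∫ p : (EuclideanSpace ℝ (Fin d)) × (EuclideanSpace ℝ (Fin d)), (inner ℝ u (p.1 - z) : ℝ) ∂γ)
          - ((∫ p : (EuclideanSpace ℝ (Fin d)) × (EuclideanSpace ℝ (Fin d)), (inner ℝ v (p.2 - z) : ℝ) * (inner ℝ u (p.2 - z) : ℝ) ∂γ)
            - (∫ p : (EuclideanSpace ℝ (Fin d)) × (EuclideanSpace ℝ (Fin d)), (inner ℝ v (p.2 - z) : ℝ) ∂γ)
              * ∫ p : (EuclideanSpace ℝ (Fin d)) × (EuclideanSpace ℝ (Fin d)), (inner ℝ u (p.2 - z) : ℝ) ∂γ)|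
        = |((∫ p : (EuclideanSpace ℝ (Fin d)) × (EuclideanSpace ℝ (Fin d)), (inner ℝ v (p.1 - p.2) : ℝ) * (inner ℝ u (p.1 - z) : ℝ) ∂γ)
            + ∫ p : (EuclideanSpace ℝ (Fin d)) × (EuclideanSpace ℝ (Fin d)), (inner ℝ v (p.2 - z) : ℝ) * (inner ℝ u (p.1 - p.2) : ℝ) ∂γ)
          - ((∫ p : (EuclideanSpace ℝ (Fin d)) × (EuclideanSpace ℝ (Fin d)), (inner ℝ v (p.1 - p.2) : ℝ) ∂γ)
              * (∫ p : (EuclideanSpace ℝ (Fin d)) × (EuclideanSpace ℝ (Fin d)), (inner ℝ u (p.1 - z) : ℝ) ∂γ)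
            + (∫ p : (EuclideanSpace ℝ (Fin d)) × (EuclideanSpace ℝ (Fin d)), (inner ℝ v (p.2 - z) : ℝ) ∂γ)
              * ∫ p : (EuclideanSpace ℝ (Fin d)) × (EuclideanSpace ℝ (Fin d)), (inner ℝ u (p.1 - p.2) : ℝ) ∂γ)| := by
          rw [← d1, ← d2, ← d3]
          congr 1
          ring
      _ ≤ |∫ p : (EuclideanSpace ℝ (Fin d)) × (EuclideanSpace ℝ (Fin d)), (inner ℝ v (p.1 - p.2) : ℝ) * (inner ℝ u (p.1 - z) : ℝ) ∂γ|
          + |∫ p : (EuclideanSpace ℝ (Fin d)) × (EuclideanSpace ℝ (Fin d)), (inner ℝ v (p.2 - z) : ℝ) * (inner ℝ u (p.1 - p.2) : ℝ) ∂γ|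
          + (|∫ p : (EuclideanSpace ℝ (Fin d)) × (EuclideanSpace ℝ (Fin d)), (inner ℝ v (p.1 - p.2) : ℝ) ∂γ|
              * |∫ p : (EuclideanSpace ℝ (Fin d)) × (EuclideanSpace ℝ (Fin d)), (inner ℝ u (p.1 - z) : ℝ) ∂γ|
            + |∫ p : (EuclideanSpace ℝ (Fin d)) × (EuclideanSpace ℝ (Fin d)), (inner ℝ v (p.2 - z) : ℝ) ∂γ|
              * |∫ p : (EuclideanSpace ℝ (Fin d)) × (EuclideanSpace ℝ (Fin d)), (inner ℝ u (p.1 - p.2) : ℝ) ∂γ|) := by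
          refine (abs_sub _ _).trans ?_
          gcongr
          · exact abs_add_le _ _
          · refine (abs_add_le _ _).trans ?_
            gcongr <;> exact (abs_mul _ _).le
      _ ≤ (‖v‖ * Real.sqrt C) * (‖u‖ * Real.sqrt Mμ)
          + (‖v‖ * Real.sqrt Mν) * (‖u‖ * Real.sqrt C)
          + ((‖v‖ * Real.sqrt C) * (‖u‖ * Real.sqrt Mμ)
            + (‖v‖ * Real.sqrt Mν) * (‖u‖ * Real.sqrt C)) := by
          gcongr
      _ = 2 * (Real.sqrt Mμ + Real.sqrt Mν) * Real.sqrt C * (‖u‖ * ‖v‖) := by ring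
  exact opNorm_le_of_bilin _ _ (by positivity) core

theorem stmt_12 (d : ℕ) (μ ν : Measure (EuclideanSpace ℝ (Fin d)))
    [IsProbabilityMeasure μ] [IsProbabilityMeasure ν]
    (hμ2 : Integrable (fun x => ‖x‖ ^ 2) μ) (hν2 : Integrable (fun y => ‖y‖ ^ 2) ν)
    (z : EuclideanSpace ℝ (Fin d)) :
    opNorm (covMatrix μ - covMatrix ν)
      ≤ 2 * (Real.sqrt (∫ x, ‖x - z‖ ^ 2 ∂μ) + Real.sqrt (∫ y, ‖y - z‖ ^ 2 ∂ν))
          * W2 μ ν := by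
  classical
  set K : ℝ := 2 * (Real.sqrt (∫ x, ‖x - z‖ ^ 2 ∂μ) + Real.sqrt (∫ y, ‖y - z‖ ^ 2 ∂ν))
    with hKdef
  have hK0 : 0 ≤ K := by positivity
  set S : Set ℝ := {r : ℝ | ∃ γ : Measure ((EuclideanSpace ℝ (Fin d)) × (EuclideanSpace ℝ (Fin d))),
    IsProbabilityMeasure γ ∧ γ.map Prod.fst = μ ∧ γ.map Prod.snd = ν ∧
    r = Real.sqrt (∫ p, ‖p.1 - p.2‖ ^ 2 ∂γ)} with hSdef
  have hW2 : W2 μ ν = sInf S := rfl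
  have hne : S.Nonempty := by
    refine ⟨Real.sqrt (∫ p : (EuclideanSpace ℝ (Fin d)) × (EuclideanSpace ℝ (Fin d)), ‖p.1 - p.2‖ ^ 2 ∂(μ.prod ν)), μ.prod ν, inferInstance, ?_, ?_, rfl⟩
    · simp [Measure.map_fst_prod, measure_univ]
    · simp [Measure.map_snd_prod, measure_univ]
  have hbd : ∀ r ∈ S, opNorm (covMatrix μ - covMatrix ν) ≤ K * r := by
    rintro r ⟨γ, hγ, hγ1, hγ2, rfl⟩
    exact key_coupling μ ν hμ2 hν2 z γ hγ1 hγ2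
  rcases eq_or_lt_of_le hK0 with hK | hK
  · -- K = 0
    obtain ⟨r, hr⟩ := hne
    have := hbd r hr
    rw [← hK] at this ⊢
    simpa using this.trans_eq (by ring)
  · -- K > 0
    rw [hW2]
    rw [← div_le_iff₀' hK]
    refine le_csInf hne fun r hr => ?_
    rw [div_le_iff₀' hK]
    exact hbd r hr
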